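/- Jump relation for the single-layer heat potential: let X be Hölder continuous with exponent γ > 1/2 on [0,T] and φ ∈ C⁰_{(ν)}((0,T]) (i.e., sup_{0<t≤T} t^{1−ν}|φ(t)| < ∞ for some ν ∈ (0,1]). Define w(x,t) = ∫₀ᵗ G(x,t;X_τ,τ)φ(τ)dτ. Then lim_{x→X_t^±} ∂_x w(x,t) = ∓φ(t) + ∫₀ᵗ ∂_x G(X_t,t;X_τ,τ)φ(τ)dτ. -/

import Mathlib

open MeasureTheory Filter Set

/-- The heat kernel G(x,t;ξ,s) = (2π(t−s))^{−1/2} exp(−(x−ξ)²/(2(t−s))) for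
the equation v_t = ½ v_{xx}. -/
noncomputable def heatG (x t ξ s : ℝ) : ℝ :=
  (Real.sqrt (2 * Real.pi * (t - s)))⁻¹ * Real.exp (-(x - ξ) ^ 2 / (2 * (t - s)))

/-- The spatial derivative ∂_x G(x,t;ξ,s) = −(x−ξ)/(t−s) · G(x,t;ξ,s). -/
noncomputable def heatGx (x t ξ s : ℝ) : ℝ :=
  -((x - ξ) / (t - s)) * heatG x t ξ s

noncomputable def Phic (y : ℝ) : ℝ := ∫ b in Ioi y, (2 / Real.sqrt (2*Real.pi)) * Real.exp (-b^2/2)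

lemma gauss_eq : ∀ b : ℝ, (2 / Real.sqrt (2*Real.pi)) * Real.exp (-b^2/2)
    = (2 / Real.sqrt (2*Real.pi)) * Real.exp (-(1/2) * b^2) := by
  intro b; ring_nf

lemma gauss_integrable : Integrable (fun b : ℝ => (2 / Real.sqrt (2*Real.pi)) * Real.exp (-b^2/2)) := by
  have h : Integrable (fun b : ℝ => Real.exp (-(1/2) * b^2)) := integrable_exp_neg_mul_sq (by norm_num)
  exact (h.const_mul _).congr (Eventually.of_forall (fun b => (gauss_eq b).symm))

lemma gauss_nonneg (b : ℝ) : 0 ≤ (2 / Real.sqrt (2*Real.pi)) * Real.exp (-b^2/2) := by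
  positivity

lemma Phic_zero : Phic 0 = 1 := by
  have h := integral_gaussian_Ioi (1/2)
  unfold Phic
  rw [setIntegral_congr_fun measurableSet_Ioi (fun b _ => gauss_eq b),
    integral_const_mul, h]
  rw [div_mul_eq_mul_div, div_eq_one_iff_eq (by positivity)]
  rw [show Real.pi / (1/2) = 2 * Real.pi by ring]
  ring

lemma Phic_le_one {y : ℝ} (hy : 0 ≤ y) : Phic y ≤ 1 := by
  rw [← Phic_zero]
  exact setIntegral_mono_set gauss_integrable.integrableOn
    (Eventually.of_forall (fun b => gauss_nonneg b)) (HasSubset.Subset.eventuallyLE (Ioi_subset_Ioi hy))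

lemma Phic_ge {y : ℝ} (hy : 0 ≤ y) : 1 - (2 / Real.sqrt (2*Real.pi)) * y ≤ Phic y := by
  have hsplit : Ioc 0 y ∪ Ioi y = Ioi 0 := Ioc_union_Ioi_eq_Ioi hy
  have h1 : Phic 0 = (∫ b in Ioc 0 y, (2 / Real.sqrt (2*Real.pi)) * Real.exp (-b^2/2)) + Phic y := by
    unfold Phic
    rw [← hsplit, setIntegral_union (Ioc_disjoint_Ioi le_rfl) measurableSet_Ioi
      gauss_integrable.integrableOn gauss_integrable.integrableOn]
  have h2 : (∫ b in Ioc 0 y, (2 / Real.sqrt (2*Real.pi)) * Real.exp (-b^2/2))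
      ≤ (2 / Real.sqrt (2*Real.pi)) * y := by
    have hb : ∀ b ∈ Ioc (0:ℝ) y, (2 / Real.sqrt (2*Real.pi)) * Real.exp (-b^2/2) ≤ (2 / Real.sqrt (2*Real.pi)) := by
      intro b _
      have h1 : Real.exp (-b^2/2) ≤ 1 := by
        rw [Real.exp_le_one_iff]; nlinarith [sq_nonneg b]
      exact mul_le_of_le_one_right (by positivity) h1
    calc (∫ b in Ioc 0 y, (2 / Real.sqrt (2*Real.pi)) * Real.exp (-b^2/2))
        ≤ ∫ _ in Ioc 0 y, (2 / Real.sqrt (2*Real.pi)) := by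
          apply setIntegral_mono_on gauss_integrable.integrableOn (integrableOn_const measure_Ioc_lt_top.ne) measurableSet_Ioc hb
      _ = (2 / Real.sqrt (2*Real.pi)) * y := by
          rw [setIntegral_const, measureReal_def, Real.volume_Ioc, smul_eq_mul]
          rw [ENNReal.toReal_ofReal (by linarith)]
          ring
  have h0 := Phic_zero
  linarith

lemma Phic_tendsto : Filter.Tendsto Phic (nhdsWithin 0 (Ioi 0)) (nhds 1) := by
  have hle : ∀ᶠ y in nhdsWithin (0:ℝ) (Ioi 0), Phic y ≤ 1 :=
    eventually_nhdsWithin_of_forall (fun y hy => Phic_le_one (le_of_lt hy))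
  have hge : ∀ᶠ y in nhdsWithin (0:ℝ) (Ioi 0), 1 - (2 / Real.sqrt (2*Real.pi)) * y ≤ Phic y :=
    eventually_nhdsWithin_of_forall (fun y hy => Phic_ge (le_of_lt hy))
  have hlo : Filter.Tendsto (fun y : ℝ => 1 - (2 / Real.sqrt (2*Real.pi)) * y) (nhdsWithin 0 (Ioi 0)) (nhds 1) := by
    have : Filter.Tendsto (fun y : ℝ => 1 - (2 / Real.sqrt (2*Real.pi)) * y) (nhds 0) (nhds 1) := by
      have h : Filter.Tendsto (fun y : ℝ => (2 / Real.sqrt (2*Real.pi)) * y) (nhds 0) (nhds ((2 / Real.sqrt (2*Real.pi)) * 0)) :=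
        (Filter.tendsto_id (x := nhds (0:ℝ))).const_mul _
      have h2 : Filter.Tendsto (fun y : ℝ => 1 - (2 / Real.sqrt (2*Real.pi)) * y) (nhds 0) (nhds (1 - (2 / Real.sqrt (2*Real.pi)) * 0)) :=
        (tendsto_const_nhds).sub h
      simpa using h2
    exact this.mono_left nhdsWithin_le_nhds
  exact tendsto_of_tendsto_of_tendsto_of_le_of_le' hlo tendsto_const_nhds hge hle

lemma kint_eq {t ρ s : ℝ} (hρ : 0 < ρ) (hst : s < t) :
    ∫ τ in Ioo s t, (ρ/(t-τ)) * (Real.sqrt (2*Real.pi*(t-τ)))⁻¹ * Real.exp (-ρ^2/(2*(t-τ)))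
      = Phic (ρ / Real.sqrt (t - s)) := by
  set f : ℝ → ℝ := fun τ => ρ / Real.sqrt (t - τ) with hf
  set f' : ℝ → ℝ := fun τ => ρ / (2 * (t-τ) * Real.sqrt (t-τ)) with hf'
  have hderiv : ∀ τ ∈ Ioo s t, HasDerivWithinAt f (f' τ) (Ioo s t) τ := by
    intro τ hτ
    have h1 : (0:ℝ) < t - τ := by simp at hτ; linarith [hτ.2]
    have hsq : HasDerivAt (fun τ : ℝ => Real.sqrt (t - τ)) (-(1/(2*Real.sqrt (t-τ)))) τ := by
      have hin : HasDerivAt (fun τ : ℝ => t - τ) (-1) τ := by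
        simpa using (hasDerivAt_id τ).const_sub t
      have := (Real.hasDerivAt_sqrt (ne_of_gt h1)).comp τ hin
      simpa [Function.comp_def] using this
    have hq : HasDerivAt f (ρ * (-(-(1/(2*Real.sqrt (t-τ)))/(Real.sqrt (t-τ))^2))) τ := by
      have hne : Real.sqrt (t - τ) ≠ 0 := by positivity
      simpa [hf, div_eq_mul_inv] using ((hsq.inv hne).const_mul ρ)
    have heq : ρ * (-(-(1/(2*Real.sqrt (t-τ)))/(Real.sqrt (t-τ))^2)) = f' τ := by
      rw [hf']
      have h2 : Real.sqrt (t-τ) ^ 2 = t - τ := Real.sq_sqrt h1.le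
      rw [h2]
      have h3 : Real.sqrt (t - τ) ≠ 0 := by positivity
      field_simp
    rw [heq] at hq
    exact hq.hasDerivWithinAt
  have hinj : InjOn f (Ioo s t) := by
    intro a ha b hb hab
    simp only [hf] at hab
    simp only [mem_Ioo] at ha hb
    have h1 : (0:ℝ) < t - a := by linarith
    have h2 : (0:ℝ) < t - b := by linarith
    have hs1 : (0:ℝ) < Real.sqrt (t-a) := Real.sqrt_pos.2 h1
    have hs2 : (0:ℝ) < Real.sqrt (t-b) := Real.sqrt_pos.2 h2
    field_simp at hab
    have : t - a = t - b := by
      rw [← Real.sq_sqrt h1.le, ← Real.sq_sqrt h2.le, hab]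
    linarith
  have himg : f '' Ioo s t = Ioi (ρ / Real.sqrt (t - s)) := by
    ext b; constructor
    · rintro ⟨τ, hτ, rfl⟩
      simp only [mem_Ioo] at hτ
      have h1 : (0:ℝ) < t - τ := by linarith
      have h2 : Real.sqrt (t - τ) < Real.sqrt (t - s) := by
        apply Real.sqrt_lt_sqrt h1.le; linarith
      simp only [mem_Ioi, hf]
      apply div_lt_div_of_pos_left hρ (Real.sqrt_pos.2 h1) h2
    · intro hb
      simp only [mem_Ioi] at hb
      have hbpos : 0 < b := lt_trans (div_pos hρ (Real.sqrt_pos.2 (by linarith))) hb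
      refine ⟨t - ρ^2/b^2, ?_, ?_⟩
      · constructor
        · have hts : (0:ℝ) < t - s := by linarith
          have h3 : ρ < b * Real.sqrt (t - s) := by
            rwa [div_lt_iff₀ (by positivity)] at hb
          have h4 : ρ^2 < b^2 * (t - s) := by
            nlinarith [Real.sq_sqrt hts.le, Real.sqrt_nonneg (t-s)]
          have : ρ^2/b^2 < t - s := by
            rw [div_lt_iff₀ (by positivity)]; nlinarith
          linarith
        · have : 0 < ρ^2/b^2 := by positivity
          linarith
      · simp only [hf]
        rw [show t - (t - ρ^2/b^2) = ρ^2/b^2 by ring]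
        rw [show ρ^2/b^2 = (ρ/b)^2 by ring, Real.sqrt_sq (by positivity)]
        field_simp
  have := integral_image_eq_integral_abs_deriv_smul measurableSet_Ioo hderiv hinj
    (fun b => (2 / Real.sqrt (2*Real.pi)) * Real.exp (-b^2/2))
  rw [himg] at this
  unfold Phic
  rw [this]
  apply setIntegral_congr_fun measurableSet_Ioo
  intro τ hτ
  simp only [mem_Ioo] at hτ
  have h1 : (0:ℝ) < t - τ := by linarith
  have hs1 : (0:ℝ) < Real.sqrt (t-τ) := Real.sqrt_pos.2 h1
  have hpi : (0:ℝ) < Real.sqrt (2*Real.pi) := Real.sqrt_pos.2 (by positivity)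
  simp only [smul_eq_mul, hf, hf']
  rw [abs_of_pos (by positivity)]
  rw [show (ρ / Real.sqrt (t-τ))^2 = ρ^2/(t-τ) by
    rw [div_pow, Real.sq_sqrt h1.le]]
  rw [Real.sqrt_mul (by positivity) (t-τ)]
  have h2 : Real.sqrt (t-τ) ^ 2 = t - τ := Real.sq_sqrt h1.le
  field_simp

lemma rpow_base_bound {x y z β : ℝ} (hx : 0 < x) (hxy : x ≤ y) (hyz : y ≤ z) :
    y ^ β ≤ x ^ β + z ^ β := by
  rcases le_or_gt 0 β with hβ | hβ
  · have h1 : y ^ β ≤ z ^ β := Real.rpow_le_rpow (by linarith) hyz hβ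
    have h2 : (0:ℝ) ≤ x ^ β := (Real.rpow_pos_of_pos hx β).le
    linarith
  · have h1 : y ^ β ≤ x ^ β := Real.rpow_le_rpow_of_nonpos hx hxy hβ.le
    have h2 : (0:ℝ) ≤ z ^ β := (Real.rpow_pos_of_pos (lt_of_lt_of_le (lt_of_lt_of_le hx hxy) hyz) β).le
    linarith

lemma integrableOn_rpow_Ioo {c p : ℝ} (hp : -1 < p) (hc : 0 < c) :
    IntegrableOn (fun τ : ℝ => τ ^ p) (Ioo 0 c) volume := by
  have := intervalIntegral.intervalIntegrable_rpow' (a := 0) (b := c) hp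
  rw [intervalIntegrable_iff, uIoc_of_le hc.le] at this
  exact this.mono_set Ioo_subset_Ioc_self

lemma integrableOn_rpow_refl_Ioo {c t p : ℝ} (hp : -1 < p) (hct : c < t) :
    IntegrableOn (fun τ : ℝ => (t - τ) ^ p) (Ioo c t) volume := by
  have h1 := intervalIntegral.intervalIntegrable_rpow' (a := 0) (b := t - c) hp
  have h2 := h1.comp_sub_left t
  rw [intervalIntegrable_iff] at h2
  rw [show t - 0 = t by ring, show t - (t - c) = c by ring, uIoc_comm, uIoc_of_le hct.le] at h2
  exact h2.mono_set Ioo_subset_Ioc_self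

/-- Integrability of τ^(ν-1) (t-τ)^β on (0,t). -/
lemma int_prod {t ν β : ℝ} (ht : 0 < t) (hν : 0 < ν) (hβ : -1 < β) :
    IntegrableOn (fun τ => τ ^ (ν-1) * (t-τ) ^ β) (Ioo 0 t) volume := by
  have hsplit : Ioo (0:ℝ) t = Ioo 0 (t/2) ∪ Ico (t/2) t := by
    rw [Ioo_union_Ico_eq_Ioo (by linarith) (by linarith)]
  rw [hsplit]
  apply IntegrableOn.union
  · have hmeas : AEStronglyMeasurable (fun τ => τ ^ (ν-1) * (t-τ) ^ β) (volume.restrict (Ioo 0 (t/2))) := by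
      apply ContinuousOn.aestronglyMeasurable ?_ measurableSet_Ioo
      intro τ hτ
      simp only [mem_Ioo] at hτ
      apply ContinuousWithinAt.mul
      · exact (Real.continuousAt_rpow_const τ _ (Or.inl (ne_of_gt hτ.1))).continuousWithinAt
      · exact (ContinuousAt.comp (Real.continuousAt_rpow_const _ _ (Or.inl (ne_of_gt (by simp only [Pi.sub_apply, id_eq]; nlinarith [hτ.2]))))
          ((continuous_const.sub continuous_id).continuousAt)).continuousWithinAt
    apply Integrable.mono' (g := fun τ => ((t/2) ^ β + t ^ β) * τ ^ (ν-1))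
      (((integrableOn_rpow_Ioo (by linarith) (by linarith))).const_mul _) hmeas
    · filter_upwards [ae_restrict_mem measurableSet_Ioo] with τ hτ
      simp only [mem_Ioo] at hτ
      have h1 : (0:ℝ) < τ := hτ.1
      have h2 : τ < t/2 := hτ.2
      rw [Real.norm_eq_abs, abs_mul, abs_of_nonneg (Real.rpow_nonneg h1.le _), abs_of_nonneg (Real.rpow_nonneg (by linarith) _)]
      rw [mul_comm]
      apply mul_le_mul_of_nonneg_right _ (Real.rpow_nonneg h1.le _)
      exact rpow_base_bound (by linarith) (by linarith) (by linarith)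
  · have hmeas : AEStronglyMeasurable (fun τ => τ ^ (ν-1) * (t-τ) ^ β) (volume.restrict (Ico (t/2) t)) := by
      apply ContinuousOn.aestronglyMeasurable ?_ measurableSet_Ico
      intro τ hτ
      simp only [mem_Ico] at hτ
      apply ContinuousWithinAt.mul
      · exact (Real.continuousAt_rpow_const τ _ (Or.inl (by nlinarith [hτ.1]))).continuousWithinAt
      · exact (ContinuousAt.comp (Real.continuousAt_rpow_const _ _ (Or.inl (ne_of_gt (by simp only [Pi.sub_apply, id_eq]; nlinarith [hτ.2]))))
          ((continuous_const.sub continuous_id).continuousAt)).continuousWithinAt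
    apply Integrable.mono' (g := fun τ => ((t/2) ^ (ν-1) + t ^ (ν-1)) * (t-τ) ^ β)
      (((integrableOn_rpow_refl_Ioo (c := t/4) (by linarith) (by linarith)).mono_set
        (fun τ hτ => mem_Ioo.2 ⟨by simp only [mem_Ico] at hτ; linarith [hτ.1], (mem_Ico.1 hτ).2⟩)).const_mul _)
      hmeas
    · filter_upwards [ae_restrict_mem measurableSet_Ico] with τ hτ
      simp only [mem_Ico] at hτ
      have h1 : t/2 ≤ τ := hτ.1
      have h2 : τ < t := hτ.2
      rw [Real.norm_eq_abs, abs_mul, abs_of_nonneg (Real.rpow_nonneg (by linarith) _), abs_of_nonneg (Real.rpow_nonneg (by linarith) _)]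
      apply mul_le_mul_of_nonneg_right _ (Real.rpow_nonneg (by linarith) _)
      exact rpow_base_bound (by linarith) h1 h2.le

lemma aux12 {x : ℝ} (hx : 0 < x) : (Real.sqrt x)⁻¹ = x ^ (-(1:ℝ)/2) := by
  rw [show -(1:ℝ)/2 = -(1/2) by ring, Real.rpow_neg hx.le, Real.sqrt_eq_rpow]

lemma aux32 {x : ℝ} (hx : 0 < x) : (x * Real.sqrt x)⁻¹ = x ^ (-(3:ℝ)/2) := by
  rw [show -(3:ℝ)/2 = -(3/2) by ring, Real.rpow_neg hx.le]
  congr 1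
  rw [show (3:ℝ)/2 = 1 + 1/2 by ring, Real.rpow_add hx, Real.rpow_one, Real.sqrt_eq_rpow]

/-- mean value bound for h(w) = w exp(-w²/(2a)) -/
lemma mvt3 {a : ℝ} (ha : 0 < a) (u v : ℝ) :
    |u * Real.exp (-u^2/(2*a)) - v * Real.exp (-v^2/(2*a))| ≤ 3 * |u - v| := by
  have hderiv : ∀ w : ℝ, HasDerivAt (fun w => w * Real.exp (-w^2/(2*a)))
      ((1 - w^2/a) * Real.exp (-w^2/(2*a))) w := by
    intro w
    have h1 : HasDerivAt (fun w : ℝ => -w^2/(2*a)) (-w/a) w := by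
      have := ((hasDerivAt_pow 2 w).neg).div_const (2*a)
      refine this.congr_deriv ?_
      field_simp; ring
    have h3 := ((Real.hasDerivAt_exp _).comp w h1)
    have h4 := (hasDerivAt_id w).mul h3
    refine h4.congr_deriv ?_
    simp only [id_eq, Function.comp_apply]
    field_simp
    ring
  have hbound : ∀ w : ℝ, ‖(1 - w^2/a) * Real.exp (-w^2/(2*a))‖ ≤ 3 := by
    intro w
    rw [Real.norm_eq_abs, abs_mul, abs_of_pos (Real.exp_pos _)]
    set s := w^2/a with hs
    have hs0 : 0 ≤ s := by positivity
    have hexp : Real.exp (-w^2/(2*a)) = Real.exp (-(s/2)) := by rw [hs]; ring_nf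
    rw [hexp]
    have h1 : |1 - s| ≤ 1 + s := by rw [abs_le]; constructor <;> linarith
    have h2 : Real.exp (-(s/2)) ≤ 1 := by rw [Real.exp_le_one_iff]; linarith
    have h3 : s * Real.exp (-(s/2)) ≤ 2 := by
      have h4 : s/2 + 1 ≤ Real.exp (s/2) := Real.add_one_le_exp _
      have h5 : Real.exp (-(s/2)) = (Real.exp (s/2))⁻¹ := by rw [← Real.exp_neg]
      rw [h5]
      rw [mul_inv_le_iff₀ (Real.exp_pos _)]
      nlinarith
    calc |1 - s| * Real.exp (-(s/2)) ≤ (1 + s) * Real.exp (-(s/2)) := by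
          apply mul_le_mul_of_nonneg_right h1 (Real.exp_pos _).le
      _ = Real.exp (-(s/2)) + s * Real.exp (-(s/2)) := by ring
      _ ≤ 3 := by linarith
  have := Convex.norm_image_sub_le_of_norm_hasDerivWithin_le
    (fun w _ => (hderiv w).hasDerivWithinAt) (fun w _ => hbound w)
    convex_univ (mem_univ v) (mem_univ u)
  rw [Real.norm_eq_abs, Real.norm_eq_abs] at this
  exact this

lemma heatGx_abs {x t ξ τ : ℝ} (h : τ < t) :
    |heatGx x t ξ τ| = (|x-ξ|/(t-τ)) * (Real.sqrt (2*Real.pi*(t-τ)))⁻¹ * Real.exp (-(x-ξ)^2/(2*(t-τ))) := by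
  unfold heatGx heatG
  have h1 : (0:ℝ) < t - τ := by linarith
  rw [abs_mul, abs_mul, abs_neg, abs_div, abs_of_pos h1, abs_of_pos (Real.exp_pos _),
    abs_of_nonneg (inv_nonneg.2 (Real.sqrt_nonneg _))]
  ring

lemma heatGx_eq {x t ξ τ : ℝ} :
    heatGx x t ξ τ = -((Real.sqrt (2*Real.pi*(t-τ)))⁻¹/(t-τ)) * ((x - ξ) * Real.exp (-(x-ξ)^2/(2*(t-τ)))) := by
  unfold heatGx heatG; ring

/-- difference of heatGx in ξ -/
lemma heatGx_diff {x t ξ₁ ξ₂ τ : ℝ} (h : τ < t) :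
    |heatGx x t ξ₁ τ - heatGx x t ξ₂ τ| ≤ (3 / Real.sqrt (2*Real.pi)) * |ξ₁ - ξ₂| * (t-τ) ^ (-(3:ℝ)/2) := by
  have h1 : (0:ℝ) < t - τ := by linarith
  rw [heatGx_eq, heatGx_eq, ← mul_sub, abs_mul]
  have h2 := mvt3 h1 (x - ξ₁) (x - ξ₂)
  have h3 : (x - ξ₁) - (x - ξ₂) = ξ₂ - ξ₁ := by ring
  rw [h3] at h2
  have h4 : |(-((Real.sqrt (2*Real.pi*(t-τ)))⁻¹/(t-τ)))| = (Real.sqrt (2*Real.pi))⁻¹ * (t-τ)^(-(3:ℝ)/2) := by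
    rw [abs_neg, abs_div, abs_of_nonneg (inv_nonneg.2 (Real.sqrt_nonneg _)), abs_of_pos h1]
    rw [Real.sqrt_mul (by positivity) (t-τ), ← aux32 h1]
    rw [mul_inv]
    field_simp
  rw [h4]
  have h5 : |ξ₂ - ξ₁| = |ξ₁ - ξ₂| := abs_sub_comm _ _
  calc (Real.sqrt (2*Real.pi))⁻¹ * (t-τ)^(-(3:ℝ)/2) * |(x - ξ₁) * Real.exp (-(x-ξ₁)^2/(2*(t-τ))) - (x - ξ₂) * Real.exp (-(x-ξ₂)^2/(2*(t-τ)))|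
      ≤ (Real.sqrt (2*Real.pi))⁻¹ * (t-τ)^(-(3:ℝ)/2) * (3 * |ξ₁ - ξ₂|) := by
        apply mul_le_mul_of_nonneg_left _ (by positivity)
        rw [← h5]; exact h2
    _ = (3 / Real.sqrt (2*Real.pi)) * |ξ₁ - ξ₂| * (t-τ) ^ (-(3:ℝ)/2) := by ring

/-- far bound -/
lemma heatGx_far {x t ξ τ : ℝ} (h : τ < t) (hne : x ≠ ξ) :
    |heatGx x t ξ τ| ≤ 2 / Real.sqrt (2*Real.pi) * (t-τ) ^ (-(1:ℝ)/2) / |x-ξ| := by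
  have h1 : (0:ℝ) < t - τ := by linarith
  have h2 : (0:ℝ) < |x - ξ| := abs_pos.2 (sub_ne_zero.2 hne)
  rw [heatGx_abs h]
  have hexp : Real.exp (-(x-ξ)^2/(2*(t-τ))) ≤ 2*(t-τ)/(x-ξ)^2 := by
    have h3 : (0:ℝ) < (x-ξ)^2 := by rw [← sq_abs]; exact pow_pos h2 2
    have h4 : Real.exp (-(x-ξ)^2/(2*(t-τ))) = (Real.exp ((x-ξ)^2/(2*(t-τ))))⁻¹ := by
      rw [← Real.exp_neg]; ring_nf
    rw [h4]
    have h5 : (x-ξ)^2/(2*(t-τ)) ≤ Real.exp ((x-ξ)^2/(2*(t-τ))) := by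
      have := Real.add_one_le_exp ((x-ξ)^2/(2*(t-τ)))
      linarith [this]
    rw [inv_le_comm₀ (Real.exp_pos _) (by apply div_pos (by positivity) h3)]
    calc (2*(t-τ)/(x-ξ)^2)⁻¹ = (x-ξ)^2/(2*(t-τ)) := by rw [inv_div]
      _ ≤ Real.exp ((x-ξ)^2/(2*(t-τ))) := h5
  have hsq : Real.sqrt (2*Real.pi*(t-τ)) = Real.sqrt (2*Real.pi) * Real.sqrt (t-τ) :=
    Real.sqrt_mul (by positivity) _
  have hs2 : (0:ℝ) < Real.sqrt (2*Real.pi) := Real.sqrt_pos.2 (by positivity)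
  have hs3 : (0:ℝ) < Real.sqrt (t-τ) := Real.sqrt_pos.2 h1
  calc (|x-ξ|/(t-τ)) * (Real.sqrt (2*Real.pi*(t-τ)))⁻¹ * Real.exp (-(x-ξ)^2/(2*(t-τ)))
      ≤ (|x-ξ|/(t-τ)) * (Real.sqrt (2*Real.pi*(t-τ)))⁻¹ * (2*(t-τ)/(x-ξ)^2) := by
        apply mul_le_mul_of_nonneg_left hexp (by positivity)
    _ = 2 / Real.sqrt (2*Real.pi) * (t-τ) ^ (-(1:ℝ)/2) / |x-ξ| := by
        rw [hsq, ← aux12 h1, ← sq_abs (x-ξ)]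
        have key : ∀ A a s q : ℝ, A ≠ 0 → a ≠ 0 → s ≠ 0 → q ≠ 0 →
            (A/a) * (s*q)⁻¹ * (2*a/A^2) = 2/s * q⁻¹ / A := by
          intros A a s q hA ha hs hq
          field_simp
        exact key _ _ _ _ h2.ne' h1.ne' hs2.ne' hs3.ne'

lemma heatG_hasDeriv {t ξ τ : ℝ} (x : ℝ) :
    HasDerivAt (fun y => heatG y t ξ τ) (heatGx x t ξ τ) x := by
  unfold heatG heatGx
  have h1 : HasDerivAt (fun y : ℝ => -(y - ξ)^2/(2*(t-τ))) (-(x-ξ)/(t-τ)) x := by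
    have h2 : HasDerivAt (fun y : ℝ => y - ξ) 1 x := (hasDerivAt_id x).sub_const ξ
    have h3 := (h2.pow 2).neg.div_const (2*(t-τ))
    refine h3.congr_deriv ?_
    rcases eq_or_ne (t - τ) 0 with h | h
    · rw [h]; simp
    · field_simp; ring
  have h4 := (h1.exp).const_mul ((Real.sqrt (2*Real.pi*(t-τ)))⁻¹)
  refine h4.congr_deriv ?_
  unfold heatG
  ring

lemma heatG_abs_le {x t ξ τ : ℝ} (h : τ < t) :
    |heatG x t ξ τ| ≤ (Real.sqrt (2*Real.pi))⁻¹ * (t-τ) ^ (-(1:ℝ)/2) := by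
  have h1 : (0:ℝ) < t - τ := by linarith
  unfold heatG
  rw [abs_mul, abs_of_nonneg (inv_nonneg.2 (Real.sqrt_nonneg _)), abs_of_pos (Real.exp_pos _)]
  rw [Real.sqrt_mul (by positivity) (t-τ), mul_inv, ← aux12 h1]
  have h2 : Real.exp (-(x-ξ)^2/(2*(t-τ))) ≤ 1 := by
    rw [Real.exp_le_one_iff]
    have : (0:ℝ) ≤ (x-ξ)^2 := sq_nonneg _
    have : (0:ℝ) < 2*(t-τ) := by linarith
    apply div_nonpos_of_nonpos_of_nonneg <;> nlinarith
  nlinarith [mul_pos (inv_pos.2 (Real.sqrt_pos.2 (show (0:ℝ) < 2*Real.pi by positivity)))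
    (inv_pos.2 (Real.sqrt_pos.2 h1)), Real.exp_pos (-(x-ξ)^2/(2*(t-τ))),
    mul_nonneg (inv_nonneg.2 (Real.sqrt_nonneg (2*Real.pi))) (le_of_lt (inv_pos.2 (Real.sqrt_pos.2 h1)))]

lemma heatGx_contx {t ξ τ : ℝ} : Continuous (fun x => heatGx x t ξ τ) := by
  unfold heatGx heatG
  apply Continuous.mul
  · exact ((continuous_id.sub continuous_const).div_const _).neg
  · exact continuous_const.mul (((((continuous_id.sub continuous_const).pow 2).neg).div_const _).rexp)

lemma heatG_contOn {x t : ℝ} {X : ℝ → ℝ} (hX : ContinuousOn X (Ioo 0 t)) :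
    ContinuousOn (fun τ => heatG x t (X τ) τ) (Ioo 0 t) := by
  intro τ hτ
  have h1 : (0:ℝ) < t - τ := by simp only [mem_Ioo] at hτ; linarith [hτ.2]
  unfold heatG
  apply ContinuousWithinAt.mul
  · apply ContinuousWithinAt.inv₀
    · exact (Real.continuous_sqrt.comp ((continuous_const.mul (continuous_const.sub continuous_id)))).continuousWithinAt
    · exact ne_of_gt (Real.sqrt_pos.2 (by positivity))
  · apply ContinuousWithinAt.rexp
    apply ContinuousWithinAt.div
    · exact (((continuousWithinAt_const.sub (hX τ hτ)).pow 2).neg)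
    · exact (continuous_const.mul (continuous_const.sub continuous_id)).continuousWithinAt
    · positivity

lemma heatGx_contOn {x t : ℝ} {X : ℝ → ℝ} (hX : ContinuousOn X (Ioo 0 t)) :
    ContinuousOn (fun τ => heatGx x t (X τ) τ) (Ioo 0 t) := by
  intro τ hτ
  have h1 : (0:ℝ) < t - τ := by simp only [mem_Ioo] at hτ; linarith [hτ.2]
  unfold heatGx
  apply ContinuousWithinAt.mul
  · apply ContinuousWithinAt.neg
    apply ContinuousWithinAt.div
    · exact continuousWithinAt_const.sub (hX τ hτ)
    · exact (continuous_const.sub continuous_id).continuousWithinAt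
    · exact ne_of_gt h1
  · exact heatG_contOn hX τ hτ

lemma X_contOn {X : ℝ → ℝ} {γ T m : ℝ} (hγ : 0 < γ)
    (hHolder : ∀ s ∈ Set.Icc (0:ℝ) T, ∀ u ∈ Set.Icc (0:ℝ) T, |X u - X s| ≤ m * |u - s| ^ γ) :
    ContinuousOn X (Icc 0 T) := by
  intro s hs
  rw [ContinuousWithinAt, tendsto_iff_dist_tendsto_zero]
  have hb : ∀ u ∈ Icc (0:ℝ) T, dist (X u) (X s) ≤ m * |u - s| ^ γ := by
    intro u hu
    rw [Real.dist_eq]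
    exact hHolder s hs u hu
  have hbnd : Filter.Tendsto (fun u => m * |u - s| ^ γ) (nhdsWithin s (Icc 0 T)) (nhds 0) := by
    have h1 : Filter.Tendsto (fun u : ℝ => |u - s|) (nhds s) (nhds 0) := by
      have := ((continuous_id.sub (continuous_const (y := s))).abs).tendsto s
      simpa using this
    have h2 : Filter.Tendsto (fun u : ℝ => |u - s| ^ γ) (nhds s) (nhds 0) := by
      have h3 : ContinuousAt (fun z : ℝ => z ^ γ) 0 :=
        Real.continuousAt_rpow_const 0 γ (Or.inr hγ.le)
      have h4 := h3.tendsto.comp h1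
      simpa [Function.comp_def, Real.zero_rpow (ne_of_gt hγ)] using h4
    have h5 : Filter.Tendsto (fun u : ℝ => m * |u - s| ^ γ) (nhds s) (nhds (m * 0)) :=
      h2.const_mul m
    rw [mul_zero] at h5
    exact h5.mono_left nhdsWithin_le_nhds
  apply squeeze_zero' (eventually_nhdsWithin_of_forall (fun u _ => dist_nonneg))
    (eventually_nhdsWithin_of_forall hb) hbnd
set_option maxHeartbeats 2000000 in
/-- Jump relation for the single-layer heat potential
w(x,t) = ∫₀ᵗ G(x,t;X_τ,τ)φ(τ)dτ, for X Hölder with exponent γ > 1/2 on [0,T]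
and φ in the weighted class C⁰_{(ν)}((0,T]):
lim_{x→X_t^±} ∂_x w(x,t) = ∓φ(t) + ∫₀ᵗ ∂_x G(X_t,t;X_τ,τ)φ(τ)dτ. -/
theorem jump_relation (X : ℝ → ℝ) (γ T m : ℝ) (hγ : 1 / 2 < γ) (hγ1 : γ ≤ 1)
    (hT : 0 < T)
    (hHolder : ∀ s ∈ Set.Icc (0:ℝ) T, ∀ u ∈ Set.Icc (0:ℝ) T,
      |X u - X s| ≤ m * |u - s| ^ γ)
    (φ : ℝ → ℝ) (ν : ℝ) (hν : 0 < ν) (hν1 : ν ≤ 1)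
    (hφcont : ContinuousOn φ (Set.Ioc 0 T))
    (hφbdd : ∃ C : ℝ, ∀ t ∈ Set.Ioc (0:ℝ) T, t ^ (1 - ν) * |φ t| ≤ C)
    (t : ℝ) (ht : 0 < t) (htT : t ≤ T) :
    Filter.Tendsto
        (fun x => deriv (fun y => ∫ τ in Set.Ioo 0 t, heatG y t (X τ) τ * φ τ) x)
        (nhdsWithin (X t) (Set.Iio (X t)))
        (nhds (φ t + ∫ τ in Set.Ioo 0 t, heatGx (X t) t (X τ) τ * φ τ)) ∧
      Filter.Tendsto
        (fun x => deriv (fun y => ∫ τ in Set.Ioo 0 t, heatG y t (X τ) τ * φ τ) x)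
        (nhdsWithin (X t) (Set.Ioi (X t)))
        (nhds (-φ t + ∫ τ in Set.Ioo 0 t, heatGx (X t) t (X τ) τ * φ τ)) := by
  classical
  have hπ : (0:ℝ) < Real.sqrt (2*Real.pi) := Real.sqrt_pos.2 (by positivity)
  have hγ0 : 0 < γ := by linarith
  have hm0 : 0 ≤ m := by
    have h := hHolder 0 ⟨le_refl 0, hT.le⟩ T ⟨hT.le, le_refl T⟩
    have hTpow : 0 < |T - 0| ^ γ := by
      rw [show T - (0:ℝ) = T by ring, abs_of_pos hT]
      exact Real.rpow_pos_of_pos hT γ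
    nlinarith [abs_nonneg (X T - X 0)]
  have hsub : Ioo (0:ℝ) t ⊆ Icc 0 T := fun τ hτ =>
    ⟨le_of_lt (mem_Ioo.1 hτ).1, le_trans (le_of_lt (mem_Ioo.1 hτ).2) htT⟩
  have hsub2 : Ioo (0:ℝ) t ⊆ Ioc 0 T := fun τ hτ =>
    ⟨(mem_Ioo.1 hτ).1, le_trans (le_of_lt (mem_Ioo.1 hτ).2) htT⟩
  have hXcont : ContinuousOn X (Ioo 0 t) := (X_contOn hγ0 hHolder).mono hsub
  have hφcont' : ContinuousOn φ (Ioo 0 t) := hφcont.mono hsub2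
  obtain ⟨C₀, hC₀⟩ := hφbdd
  have hC0' : 0 ≤ C₀ :=
    le_trans (by positivity) (hC₀ t ⟨ht, htT⟩)
  have hφabs : ∀ τ, τ ∈ Ioo 0 t → |φ τ| ≤ C₀ * τ ^ (ν - 1) := by
    intro τ hτ
    obtain ⟨hτ0, hτt⟩ := mem_Ioo.1 hτ
    have h1 : (0:ℝ) < τ ^ (1 - ν) := Real.rpow_pos_of_pos hτ0 _
    have h2 := hC₀ τ ⟨hτ0, le_trans hτt.le htT⟩
    have h3 : τ ^ (ν - 1) = (τ ^ (1 - ν))⁻¹ := by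
      rw [show ν - 1 = -(1 - ν) by ring, Real.rpow_neg hτ0.le]
    calc |φ τ| = (τ ^ (1 - ν) * |φ τ|) * (τ ^ (1 - ν))⁻¹ := by field_simp
      _ ≤ C₀ * (τ ^ (1 - ν))⁻¹ := mul_le_mul_of_nonneg_right h2 (inv_nonneg.2 h1.le)
      _ = C₀ * τ ^ (ν - 1) := by rw [h3]
  set ξ0 := X t with hξ0
  have hXd : ∀ τ, τ ∈ Ioo 0 t → |X τ - ξ0| ≤ m * (t - τ) ^ γ := by
    intro τ hτ
    have h := hHolder t ⟨ht.le, htT⟩ τ (hsub hτ)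
    have h2 : |τ - t| = t - τ := by
      rw [abs_sub_comm, abs_of_pos (by linarith [(mem_Ioo.1 hτ).2])]
    rwa [h2] at h
  have hdiffB : ∀ x τ, τ ∈ Ioo 0 t →
      |heatGx x t (X τ) τ - heatGx x t ξ0 τ| ≤ (3*m/Real.sqrt (2*Real.pi)) * (t-τ) ^ (γ - 3/2) := by
    intro x τ hτ
    obtain ⟨hτ0, hτt⟩ := mem_Ioo.1 hτ
    have h1 : (0:ℝ) < t - τ := by linarith
    calc |heatGx x t (X τ) τ - heatGx x t ξ0 τ|
        ≤ (3 / Real.sqrt (2*Real.pi)) * |X τ - ξ0| * (t-τ) ^ (-(3:ℝ)/2) := heatGx_diff hτt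
      _ ≤ (3 / Real.sqrt (2*Real.pi)) * (m * (t-τ)^γ) * (t-τ) ^ (-(3:ℝ)/2) := by
          apply mul_le_mul_of_nonneg_right _ (Real.rpow_nonneg h1.le _)
          exact mul_le_mul_of_nonneg_left (hXd τ hτ) (by positivity)
      _ = (3*m/Real.sqrt (2*Real.pi)) * (t-τ) ^ (γ - 3/2) := by
          rw [show γ - 3/2 = γ + (-(3:ℝ)/2) by ring, Real.rpow_add h1]
          ring
  set I : ℝ → ℝ := fun x => ∫ τ in Ioo 0 t, heatGx x t (X τ) τ * φ τ with hIdef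
  set B : ℝ → ℝ := fun x => ∫ τ in Ioo 0 t, heatGx x t ξ0 τ with hBdef
  set E : ℝ → ℝ := fun x => ∫ τ in Ioo 0 t, heatGx x t ξ0 τ * (φ τ - φ t) with hEdef
  set R : ℝ → ℝ := fun x => ∫ τ in Ioo 0 t, (heatGx x t (X τ) τ - heatGx x t ξ0 τ) * φ τ with hRdef
  -- measurability of integrands
  have hmR : ∀ x : ℝ, AEStronglyMeasurable (fun τ => (heatGx x t (X τ) τ - heatGx x t ξ0 τ) * φ τ)
      (volume.restrict (Ioo 0 t)) := by
    intro x
    apply ContinuousOn.aestronglyMeasurable _ measurableSet_Ioo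
    exact ((heatGx_contOn hXcont).sub (heatGx_contOn continuousOn_const)).mul hφcont'
  have hmB : ∀ x : ℝ, AEStronglyMeasurable (fun τ => heatGx x t ξ0 τ)
      (volume.restrict (Ioo 0 t)) := by
    intro x
    apply ContinuousOn.aestronglyMeasurable _ measurableSet_Ioo
    exact heatGx_contOn continuousOn_const
  have hmE : ∀ x : ℝ, AEStronglyMeasurable (fun τ => heatGx x t ξ0 τ * (φ τ - φ t))
      (volume.restrict (Ioo 0 t)) := by
    intro x
    apply ContinuousOn.aestronglyMeasurable _ measurableSet_Ioo
    exact (heatGx_contOn continuousOn_const).mul (hφcont'.sub continuousOn_const)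
  have hmI : ∀ x : ℝ, AEStronglyMeasurable (fun τ => heatGx x t (X τ) τ * φ τ)
      (volume.restrict (Ioo 0 t)) := by
    intro x
    apply ContinuousOn.aestronglyMeasurable _ measurableSet_Ioo
    exact (heatGx_contOn hXcont).mul hφcont'
  -- integrability
  have hintR : ∀ x : ℝ, IntegrableOn (fun τ => (heatGx x t (X τ) τ - heatGx x t ξ0 τ) * φ τ) (Ioo 0 t) := by
    intro x
    apply Integrable.mono' (g := fun τ => ((3*m/Real.sqrt (2*Real.pi)) * C₀) * (τ ^ (ν-1) * (t-τ) ^ (γ - 3/2)))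
      ((int_prod ht hν (by linarith)).const_mul _) (hmR x)
    filter_upwards [ae_restrict_mem measurableSet_Ioo] with τ hτ
    rw [Real.norm_eq_abs, abs_mul]
    have h1 : (0:ℝ) < t - τ := by linarith [(mem_Ioo.1 hτ).2]
    calc |heatGx x t (X τ) τ - heatGx x t ξ0 τ| * |φ τ|
        ≤ ((3*m/Real.sqrt (2*Real.pi)) * (t-τ) ^ (γ - 3/2)) * (C₀ * τ ^ (ν - 1)) := by
          apply mul_le_mul (hdiffB x τ hτ) (hφabs τ hτ) (abs_nonneg _)
            (mul_nonneg (div_nonneg (by linarith) hπ.le) (Real.rpow_nonneg h1.le _))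
      _ = ((3*m/Real.sqrt (2*Real.pi)) * C₀) * (τ ^ (ν-1) * (t-τ) ^ (γ - 3/2)) := by ring
  have hintB : ∀ x : ℝ, x ≠ ξ0 → IntegrableOn (fun τ => heatGx x t ξ0 τ) (Ioo 0 t) := by
    intro x hx
    apply Integrable.mono' (g := fun τ => (2 / Real.sqrt (2*Real.pi) / |x - ξ0|) * (t-τ) ^ (-(1:ℝ)/2))
      ((integrableOn_rpow_refl_Ioo (by norm_num) ht).const_mul _) (hmB x)
    filter_upwards [ae_restrict_mem measurableSet_Ioo] with τ hτ
    rw [Real.norm_eq_abs]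
    calc |heatGx x t ξ0 τ| ≤ 2 / Real.sqrt (2*Real.pi) * (t-τ) ^ (-(1:ℝ)/2) / |x-ξ0| :=
        heatGx_far (mem_Ioo.1 hτ).2 hx
      _ = (2 / Real.sqrt (2*Real.pi) / |x - ξ0|) * (t-τ) ^ (-(1:ℝ)/2) := by ring
  have hintE : ∀ x : ℝ, x ≠ ξ0 → IntegrableOn (fun τ => heatGx x t ξ0 τ * (φ τ - φ t)) (Ioo 0 t) := by
    intro x hx
    have hg : IntegrableOn (fun τ => (2 / Real.sqrt (2*Real.pi) / |x - ξ0|) *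
        (C₀ * (τ ^ (ν-1) * (t-τ) ^ (-(1:ℝ)/2)) + |φ t| * (t-τ) ^ (-(1:ℝ)/2))) (Ioo 0 t) := by
      apply Integrable.const_mul
      exact ((int_prod ht hν (by norm_num)).const_mul C₀).add
        ((integrableOn_rpow_refl_Ioo (by norm_num) ht).const_mul _)
    apply Integrable.mono' hg (hmE x)
    filter_upwards [ae_restrict_mem measurableSet_Ioo] with τ hτ
    rw [Real.norm_eq_abs, abs_mul]
    have h1 : (0:ℝ) < t - τ := by linarith [(mem_Ioo.1 hτ).2]
    have h2 : |φ τ - φ t| ≤ C₀ * τ ^ (ν-1) + |φ t| := by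
      calc |φ τ - φ t| ≤ |φ τ| + |φ t| := abs_sub _ _
        _ ≤ C₀ * τ ^ (ν-1) + |φ t| := by linarith [hφabs τ hτ]
    calc |heatGx x t ξ0 τ| * |φ τ - φ t|
        ≤ (2 / Real.sqrt (2*Real.pi) * (t-τ) ^ (-(1:ℝ)/2) / |x-ξ0|) * (C₀ * τ ^ (ν-1) + |φ t|) := by
          apply mul_le_mul (heatGx_far (mem_Ioo.1 hτ).2 hx) h2 (abs_nonneg _) (by positivity)
      _ = (2 / Real.sqrt (2*Real.pi) / |x - ξ0|) *
            (C₀ * (τ ^ (ν-1) * (t-τ) ^ (-(1:ℝ)/2)) + |φ t| * (t-τ) ^ (-(1:ℝ)/2)) := by ring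
  have hintI : ∀ x : ℝ, x ≠ ξ0 → IntegrableOn (fun τ => heatGx x t (X τ) τ * φ τ) (Ioo 0 t) := by
    intro x hx
    have h := ((hintR x).add ((hintE x hx).add ((hintB x hx).const_mul (φ t))))
    apply IntegrableOn.congr_fun h _ measurableSet_Ioo
    intro τ _
    simp only [Pi.add_apply]
    ring
  -- splitting
  have hIsplit : ∀ x : ℝ, x ≠ ξ0 → I x = R x + (E x + φ t * B x) := by
    intro x hx
    have h1 : I x = ∫ τ in Ioo 0 t,
        ((heatGx x t (X τ) τ - heatGx x t ξ0 τ) * φ τ +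
          (heatGx x t ξ0 τ * (φ τ - φ t) + φ t * heatGx x t ξ0 τ)) := by
      rw [hIdef]
      apply setIntegral_congr_fun measurableSet_Ioo
      intro τ _
      ring
    have hB' : IntegrableOn (fun τ => φ t * heatGx x t ξ0 τ) (Ioo 0 t) :=
      (hintB x hx).const_mul (φ t)
    have hEB : IntegrableOn (fun τ => heatGx x t ξ0 τ * (φ τ - φ t) + φ t * heatGx x t ξ0 τ) (Ioo 0 t) :=
      (hintE x hx).add hB'
    rw [h1, integral_add (hintR x) hEB, integral_add (hintE x hx) hB', integral_const_mul]
  have hIXt : I ξ0 = R ξ0 := by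
    rw [hIdef, hRdef]
    apply setIntegral_congr_fun measurableSet_Ioo
    intro τ _
    simp [heatGx, sub_self]
  -- the four limits
  have hst : (0:ℝ) < Real.sqrt t := Real.sqrt_pos.2 ht
  have hBleft : Filter.Tendsto B (nhdsWithin ξ0 (Iio ξ0)) (nhds 1) := by
    have hBval : ∀ x, x < ξ0 → B x = Phic ((ξ0 - x)/Real.sqrt t) := by
      intro x hx
      have hρ : 0 < ξ0 - x := by linarith
      have h := kint_eq (t := t) (ρ := ξ0 - x) (s := 0) hρ ht
      rw [show t - (0:ℝ) = t by ring] at h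
      rw [hBdef, ← h]
      apply setIntegral_congr_fun measurableSet_Ioo
      intro τ hτ
      unfold heatGx heatG
      rw [show -(x-ξ0)^2 = -(ξ0-x)^2 by ring]
      ring
    have hg : Filter.Tendsto (fun x => (ξ0 - x)/Real.sqrt t) (nhdsWithin ξ0 (Iio ξ0))
        (nhdsWithin 0 (Ioi 0)) := by
      rw [tendsto_nhdsWithin_iff]
      constructor
      · have h1 : Filter.Tendsto (fun x : ℝ => (ξ0 - x)/Real.sqrt t) (nhds ξ0)
            (nhds ((ξ0 - ξ0)/Real.sqrt t)) :=
          ((tendsto_const_nhds.sub Filter.tendsto_id)).div_const _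
        simpa using h1.mono_left nhdsWithin_le_nhds
      · apply eventually_nhdsWithin_of_forall
        intro x hx
        exact mem_Ioi.2 (div_pos (by simpa using sub_pos.2 (mem_Iio.1 hx)) hst)
    have h2 := Phic_tendsto.comp hg
    apply h2.congr'
    apply eventually_nhdsWithin_of_forall
    intro x hx
    exact (hBval x hx).symm
  have hBright : Filter.Tendsto B (nhdsWithin ξ0 (Ioi ξ0)) (nhds (-1)) := by
    have hBval : ∀ x, ξ0 < x → B x = -Phic ((x - ξ0)/Real.sqrt t) := by
      intro x hx
      have hρ : 0 < x - ξ0 := by linarith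
      have h := kint_eq (t := t) (ρ := x - ξ0) (s := 0) hρ ht
      rw [show t - (0:ℝ) = t by ring] at h
      rw [hBdef, ← h, ← integral_neg]
      apply setIntegral_congr_fun measurableSet_Ioo
      intro τ hτ
      unfold heatGx heatG
      ring
    have hg : Filter.Tendsto (fun x => (x - ξ0)/Real.sqrt t) (nhdsWithin ξ0 (Ioi ξ0))
        (nhdsWithin 0 (Ioi 0)) := by
      rw [tendsto_nhdsWithin_iff]
      constructor
      · have h1 : Filter.Tendsto (fun x : ℝ => (x - ξ0)/Real.sqrt t) (nhds ξ0)
            (nhds ((ξ0 - ξ0)/Real.sqrt t)) :=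
          ((Filter.tendsto_id.sub tendsto_const_nhds)).div_const _
        simpa using h1.mono_left nhdsWithin_le_nhds
      · apply eventually_nhdsWithin_of_forall
        intro x hx
        exact mem_Ioi.2 (div_pos (by simpa using sub_pos.2 (mem_Ioi.1 hx)) hst)
    have h2 := (Phic_tendsto.comp hg).neg
    apply h2.congr'
    apply eventually_nhdsWithin_of_forall
    intro x hx
    exact (hBval x hx).symm
  have hElim : Filter.Tendsto E (nhdsWithin ξ0 {ξ0}ᶜ) (nhds 0) := by
    rw [Metric.tendsto_nhdsWithin_nhds]
    intro ε hε
    have hφt : ContinuousWithinAt φ (Ioc 0 T) t := hφcont t ⟨ht, htT⟩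
    rw [Metric.continuousWithinAt_iff] at hφt
    obtain ⟨δ₀, hδ₀pos, hδ₀⟩ := hφt (ε/4) (by linarith)
    set s := max (t - δ₀/2) (t/2) with hsdef
    have hs0 : 0 < s := lt_of_lt_of_le (by linarith) (le_max_right _ _)
    have hstt : s < t := max_lt (by linarith) (by linarith)
    have hts0 : 0 < t - s := by linarith
    have hφsmall : ∀ τ ∈ Ioo s t, |φ τ - φ t| ≤ ε/4 := by
      intro τ hτ
      obtain ⟨h1, h2⟩ := mem_Ioo.1 hτ
      have hτ0 : 0 < τ := lt_trans hs0 h1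
      have hmem : τ ∈ Ioc 0 T := ⟨hτ0, le_trans h2.le htT⟩
      have hd : dist τ t < δ₀ := by
        rw [Real.dist_eq, abs_sub_comm, abs_of_pos (by linarith)]
        have h3 : t - δ₀/2 ≤ s := le_max_left _ _
        linarith
      have := hδ₀ hmem hd
      rw [Real.dist_eq] at this
      linarith
    set K := ((t-s) * Real.sqrt (2*Real.pi*(t-s)))⁻¹ with hKdef
    have hK0 : 0 < K := by
      apply inv_pos.2
      exact mul_pos hts0 (Real.sqrt_pos.2 (by positivity))
    set M := ∫ τ in Ioc 0 s, (C₀ * τ^(ν-1) + |φ t|) with hMdef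
    have hMint : IntegrableOn (fun τ => C₀ * τ^(ν-1) + |φ t|) (Ioc 0 s) := by
      have h1 := intervalIntegral.intervalIntegrable_rpow' (a := 0) (b := s) (show (-1:ℝ) < ν-1 by linarith)
      rw [intervalIntegrable_iff, uIoc_of_le hs0.le] at h1
      exact (h1.const_mul C₀).add (integrableOn_const measure_Ioc_lt_top.ne)
    have hM0 : 0 ≤ M := by
      apply setIntegral_nonneg measurableSet_Ioc
      intro τ hτ
      exact add_nonneg (mul_nonneg hC0' (Real.rpow_nonneg (le_of_lt hτ.1) _)) (abs_nonneg _)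
    have hKM1 : (0:ℝ) < K*M + 1 := by nlinarith
    refine ⟨ε/(4*(K*M+1)), by positivity, ?_⟩
    intro x hxne hdist
    have hx : x ≠ ξ0 := hxne
    have hr0 : (0:ℝ) < |x - ξ0| := abs_pos.2 (sub_ne_zero.2 hx)
    rw [Real.dist_eq] at hdist
    -- split
    have hsplitSet : Ioc (0:ℝ) s ∪ Ioo s t = Ioo 0 t := Ioc_union_Ioo_eq_Ioo hs0.le hstt
    have hint1 : IntegrableOn (fun τ => heatGx x t ξ0 τ * (φ τ - φ t)) (Ioc 0 s) :=
      (hintE x hx).mono_set (by rw [← hsplitSet]; exact subset_union_left)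
    have hint2 : IntegrableOn (fun τ => heatGx x t ξ0 τ * (φ τ - φ t)) (Ioo s t) :=
      (hintE x hx).mono_set (by rw [← hsplitSet]; exact subset_union_right)
    have hEeq : E x = (∫ τ in Ioc 0 s, heatGx x t ξ0 τ * (φ τ - φ t))
        + ∫ τ in Ioo s t, heatGx x t ξ0 τ * (φ τ - φ t) := by
      have hEx : E x = ∫ τ in Ioo 0 t, heatGx x t ξ0 τ * (φ τ - φ t) := rfl
      rw [hEx]
      rw [← hsplitSet, setIntegral_union ((Ioc_disjoint_Ioi (le_refl s)).mono_right Ioo_subset_Ioi_self) measurableSet_Ioo hint1 hint2]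
    -- head bound
    have hKbound : ∀ τ ∈ Ioc (0:ℝ) s, |heatGx x t ξ0 τ| ≤ |x - ξ0| * K := by
      intro τ hτ
      obtain ⟨hτ0, hτs⟩ := mem_Ioc.1 hτ
      have h1 : (0:ℝ) < t - τ := by linarith
      have h2 : t - s ≤ t - τ := by linarith
      rw [heatGx_abs (by linarith)]
      have h3 : (t-s) * Real.sqrt (2*Real.pi*(t-s)) ≤ (t-τ) * Real.sqrt (2*Real.pi*(t-τ)) := by
        apply mul_le_mul h2 (Real.sqrt_le_sqrt (by nlinarith [Real.pi_pos])) (Real.sqrt_nonneg _) h1.le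
      have h4 : ((t-τ) * Real.sqrt (2*Real.pi*(t-τ)))⁻¹ ≤ K := by
        rw [hKdef]
        apply inv_anti₀ (by positivity) h3
      have h5 : Real.exp (-(x-ξ0)^2/(2*(t-τ))) ≤ 1 := by
        rw [Real.exp_le_one_iff]
        have h6 : (0:ℝ) ≤ (x-ξ0)^2 := sq_nonneg _
        apply div_nonpos_of_nonpos_of_nonneg (by nlinarith) (by linarith)
      calc (|x-ξ0|/(t-τ)) * (Real.sqrt (2*Real.pi*(t-τ)))⁻¹ * Real.exp (-(x-ξ0)^2/(2*(t-τ)))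
          ≤ (|x-ξ0|/(t-τ)) * (Real.sqrt (2*Real.pi*(t-τ)))⁻¹ * 1 := by
            apply mul_le_mul_of_nonneg_left h5 (by positivity)
        _ = |x-ξ0| * ((t-τ) * Real.sqrt (2*Real.pi*(t-τ)))⁻¹ := by
            rw [mul_inv]; ring
        _ ≤ |x-ξ0| * K := mul_le_mul_of_nonneg_left h4 (abs_nonneg _)
    have hhead : ‖∫ τ in Ioc 0 s, heatGx x t ξ0 τ * (φ τ - φ t)‖ ≤ |x - ξ0| * K * M := by
      have hgle : ∀ᵐ τ ∂(volume.restrict (Ioc 0 s)),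
          ‖heatGx x t ξ0 τ * (φ τ - φ t)‖ ≤ (|x - ξ0| * K) * (C₀ * τ^(ν-1) + |φ t|) := by
        filter_upwards [ae_restrict_mem measurableSet_Ioc] with τ hτ
        obtain ⟨hτ0, hτs⟩ := mem_Ioc.1 hτ
        rw [Real.norm_eq_abs, abs_mul]
        have h7 : |φ τ - φ t| ≤ C₀ * τ^(ν-1) + |φ t| := by
          have h8 := hφabs τ (mem_Ioo.2 ⟨hτ0, by linarith⟩)
          calc |φ τ - φ t| ≤ |φ τ| + |φ t| := abs_sub _ _
            _ ≤ C₀ * τ^(ν-1) + |φ t| := by linarith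
        apply mul_le_mul (hKbound τ hτ) h7 (abs_nonneg _)
          (mul_nonneg (abs_nonneg _) hK0.le)
      have := norm_integral_le_of_norm_le (hMint.const_mul (|x - ξ0| * K)) hgle
      calc ‖∫ τ in Ioc 0 s, heatGx x t ξ0 τ * (φ τ - φ t)‖
          ≤ ∫ τ in Ioc 0 s, (|x - ξ0| * K) * (C₀ * τ^(ν-1) + |φ t|) := this
        _ = |x - ξ0| * K * M := by rw [integral_const_mul, hMdef]
    -- tail bound
    have htailval : (∫ τ in Ioo s t, |heatGx x t ξ0 τ|) = Phic (|x - ξ0| / Real.sqrt (t - s)) := by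
      rw [← kint_eq hr0 hstt]
      apply setIntegral_congr_fun measurableSet_Ioo
      intro τ hτ
      show |heatGx x t ξ0 τ| = |x - ξ0| / (t - τ) * (Real.sqrt (2*Real.pi*(t-τ)))⁻¹
        * Real.exp (-|x - ξ0| ^ 2 / (2 * (t - τ)))
      rw [heatGx_abs (mem_Ioo.1 hτ).2, show -|x-ξ0|^2 = -(x-ξ0)^2 by rw [sq_abs]]
    have htail : ‖∫ τ in Ioo s t, heatGx x t ξ0 τ * (φ τ - φ t)‖ ≤ ε/4 := by
      have habs : IntegrableOn (fun τ => |heatGx x t ξ0 τ|) (Ioo s t) :=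
        (((hintB x hx).mono_set (by rw [← hsplitSet]; exact subset_union_right))).abs
      have hgle : ∀ᵐ τ ∂(volume.restrict (Ioo s t)),
          ‖heatGx x t ξ0 τ * (φ τ - φ t)‖ ≤ (ε/4) * |heatGx x t ξ0 τ| := by
        filter_upwards [ae_restrict_mem measurableSet_Ioo] with τ hτ
        rw [Real.norm_eq_abs, abs_mul, mul_comm]
        apply mul_le_mul_of_nonneg_right (hφsmall τ hτ) (abs_nonneg _)
      have h1 := norm_integral_le_of_norm_le (habs.const_mul (ε/4)) hgle
      have h2 : (∫ τ in Ioo s t, (ε/4) * |heatGx x t ξ0 τ|) = (ε/4) * Phic (|x - ξ0| / Real.sqrt (t - s)) := by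
        rw [integral_const_mul, htailval]
      have h3 : Phic (|x - ξ0| / Real.sqrt (t - s)) ≤ 1 :=
        Phic_le_one (div_nonneg (abs_nonneg _) (Real.sqrt_nonneg _))
      calc ‖∫ τ in Ioo s t, heatGx x t ξ0 τ * (φ τ - φ t)‖
          ≤ (∫ τ in Ioo s t, (ε/4) * |heatGx x t ξ0 τ|) := h1
        _ = (ε/4) * Phic (|x - ξ0| / Real.sqrt (t - s)) := h2
        _ ≤ ε/4 := by nlinarith
    -- combine
    rw [dist_zero_right, Real.norm_eq_abs, hEeq]
    have hcomb : |(∫ τ in Ioc 0 s, heatGx x t ξ0 τ * (φ τ - φ t))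
        + ∫ τ in Ioo s t, heatGx x t ξ0 τ * (φ τ - φ t)|
        ≤ |x - ξ0| * K * M + ε/4 := by
      calc |(∫ τ in Ioc 0 s, heatGx x t ξ0 τ * (φ τ - φ t))
          + ∫ τ in Ioo s t, heatGx x t ξ0 τ * (φ τ - φ t)|
          ≤ |∫ τ in Ioc 0 s, heatGx x t ξ0 τ * (φ τ - φ t)|
            + |∫ τ in Ioo s t, heatGx x t ξ0 τ * (φ τ - φ t)| := abs_add_le _ _
        _ ≤ |x - ξ0| * K * M + ε/4 := by
            apply add_le_add
            · rw [← Real.norm_eq_abs]; exact hhead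
            · rw [← Real.norm_eq_abs]; exact htail
    have hδKM : |x - ξ0| * K * M ≤ ε/4 := by
      have h1 : |x - ξ0| * (K * M) ≤ (ε/(4*(K*M+1))) * (K * M) :=
        mul_le_mul_of_nonneg_right hdist.le (mul_nonneg hK0.le hM0)
      have h2 : (ε/(4*(K*M+1))) * (K * M) ≤ (ε/(4*(K*M+1))) * (K * M + 1) :=
        mul_le_mul_of_nonneg_left (by linarith) (by positivity)
      have h3 : (ε/(4*(K*M+1))) * (K * M + 1) = ε/4 := by
        field_simp
      calc |x - ξ0| * K * M = |x - ξ0| * (K * M) := by ring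
        _ ≤ (ε/(4*(K*M+1))) * (K * M) := h1
        _ ≤ (ε/(4*(K*M+1))) * (K * M + 1) := h2
        _ = ε/4 := h3
    calc |(∫ τ in Ioc 0 s, heatGx x t ξ0 τ * (φ τ - φ t))
        + ∫ τ in Ioo s t, heatGx x t ξ0 τ * (φ τ - φ t)|
        ≤ |x - ξ0| * K * M + ε/4 := hcomb
      _ ≤ ε/4 + ε/4 := by linarith
      _ < ε := by linarith
  have hRlim : Filter.Tendsto R (nhds ξ0) (nhds (R ξ0)) := by
    rw [hRdef]
    apply tendsto_integral_filter_of_dominated_convergence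
      (fun τ => ((3*m/Real.sqrt (2*Real.pi)) * C₀) * (τ ^ (ν-1) * (t-τ) ^ (γ - 3/2)))
    · exact Eventually.of_forall hmR
    · apply Eventually.of_forall
      intro x
      filter_upwards [ae_restrict_mem measurableSet_Ioo] with τ hτ
      rw [Real.norm_eq_abs, abs_mul]
      have h1 : (0:ℝ) < t - τ := by linarith [(mem_Ioo.1 hτ).2]
      calc |heatGx x t (X τ) τ - heatGx x t ξ0 τ| * |φ τ|
          ≤ ((3*m/Real.sqrt (2*Real.pi)) * (t-τ) ^ (γ - 3/2)) * (C₀ * τ ^ (ν - 1)) := by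
            apply mul_le_mul (hdiffB x τ hτ) (hφabs τ hτ) (abs_nonneg _)
              (mul_nonneg (div_nonneg (by linarith) hπ.le) (Real.rpow_nonneg h1.le _))
        _ = ((3*m/Real.sqrt (2*Real.pi)) * C₀) * (τ ^ (ν-1) * (t-τ) ^ (γ - 3/2)) := by ring
    · exact (int_prod ht hν (by linarith)).const_mul _
    · filter_upwards [ae_restrict_mem measurableSet_Ioo] with τ hτ
      exact (((heatGx_contx.sub heatGx_contx).mul continuous_const).tendsto ξ0)
  have hderiv : ∀ x : ℝ, x ≠ ξ0 →
      deriv (fun y => ∫ τ in Ioo 0 t, heatG y t (X τ) τ * φ τ) x = I x := by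
    intro x hx
    have hr0 : (0:ℝ) < |x - ξ0| := abs_pos.2 (sub_ne_zero.2 hx)
    set r₀ := |x - ξ0| with hr₀
    have key := hasDerivAt_integral_of_dominated_loc_of_deriv_le
      (μ := volume.restrict (Ioo 0 t)) (x₀ := x)
      (F := fun y τ => heatG y t (X τ) τ * φ τ)
      (F' := fun y τ => heatGx y t (X τ) τ * φ τ)
      (bound := fun τ => (C₀ * (4/(Real.sqrt (2*Real.pi) * r₀))) * (τ^(ν-1)*(t-τ)^(-(1:ℝ)/2))
        + (C₀ * (3*m/Real.sqrt (2*Real.pi))) * (τ^(ν-1)*(t-τ)^(γ - 3/2)))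
      (Metric.ball_mem_nhds x (half_pos hr0)) ?_ ?_ ?_ ?_ ?_ ?_
    · exact key.2.deriv
    · apply Eventually.of_forall
      intro y
      apply ContinuousOn.aestronglyMeasurable _ measurableSet_Ioo
      exact (heatG_contOn hXcont).mul hφcont'
    · apply Integrable.mono'
        (g := fun τ => ((Real.sqrt (2*Real.pi))⁻¹ * C₀) * (τ^(ν-1)*(t-τ)^(-(1:ℝ)/2)))
        ((int_prod ht hν (by norm_num)).const_mul _)
        (ContinuousOn.aestronglyMeasurable ((heatG_contOn hXcont).mul hφcont') measurableSet_Ioo)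
      filter_upwards [ae_restrict_mem measurableSet_Ioo] with τ hτ
      obtain ⟨hτ0, hτt⟩ := mem_Ioo.1 hτ
      have h1 : (0:ℝ) < t - τ := by linarith
      rw [Real.norm_eq_abs, Pi.mul_apply, abs_mul]
      calc |heatG x t (X τ) τ| * |φ τ|
          ≤ ((Real.sqrt (2*Real.pi))⁻¹ * (t-τ) ^ (-(1:ℝ)/2)) * (C₀ * τ ^ (ν-1)) :=
            mul_le_mul (heatG_abs_le hτt) (hφabs τ hτ) (abs_nonneg _) (by positivity)
        _ = ((Real.sqrt (2*Real.pi))⁻¹ * C₀) * (τ^(ν-1)*(t-τ)^(-(1:ℝ)/2)) := by ring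
    · exact hmI x
    · filter_upwards [ae_restrict_mem measurableSet_Ioo] with τ hτ
      intro y hy
      obtain ⟨hτ0, hτt⟩ := mem_Ioo.1 hτ
      have h1 : (0:ℝ) < t - τ := by linarith
      have hyx : |y - x| < r₀/2 := by
        rw [← Real.dist_eq]; exact Metric.mem_ball.1 hy
      have hyξ : r₀/2 < |y - ξ0| := by
        have := abs_sub_abs_le_abs_sub (x - ξ0) (x - y)
        have h2 : |x - y| = |y - x| := abs_sub_comm _ _
        have h3 : (x - ξ0) - (x - y) = y - ξ0 := by ring
        rw [h2, h3] at this
        linarith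
      have hyne : y ≠ ξ0 := by
        intro h
        rw [h, sub_self, abs_zero] at hyξ
        linarith
      rw [Real.norm_eq_abs, abs_mul]
      have hfar : |heatGx y t ξ0 τ| ≤ 2 / Real.sqrt (2*Real.pi) * (t-τ) ^ (-(1:ℝ)/2) / (r₀/2) := by
        calc |heatGx y t ξ0 τ| ≤ 2 / Real.sqrt (2*Real.pi) * (t-τ) ^ (-(1:ℝ)/2) / |y-ξ0| :=
              heatGx_far hτt hyne
          _ ≤ 2 / Real.sqrt (2*Real.pi) * (t-τ) ^ (-(1:ℝ)/2) / (r₀/2) := by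
              apply div_le_div_of_nonneg_left (by positivity) (by positivity) hyξ.le
      have htri : |heatGx y t (X τ) τ|
          ≤ (3*m/Real.sqrt (2*Real.pi)) * (t-τ) ^ (γ - 3/2)
            + 4/(Real.sqrt (2*Real.pi) * r₀) * (t-τ) ^ (-(1:ℝ)/2) := by
        have h4 : |heatGx y t (X τ) τ| ≤ |heatGx y t (X τ) τ - heatGx y t ξ0 τ| + |heatGx y t ξ0 τ| := by
          have := abs_sub_abs_le_abs_sub (heatGx y t (X τ) τ) (heatGx y t ξ0 τ)
          calc |heatGx y t (X τ) τ| = |(heatGx y t (X τ) τ - heatGx y t ξ0 τ) + heatGx y t ξ0 τ| := by ring_nf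
            _ ≤ |heatGx y t (X τ) τ - heatGx y t ξ0 τ| + |heatGx y t ξ0 τ| := abs_add_le _ _
        have h5 : 2 / Real.sqrt (2*Real.pi) * (t-τ) ^ (-(1:ℝ)/2) / (r₀/2)
            = 4/(Real.sqrt (2*Real.pi) * r₀) * (t-τ) ^ (-(1:ℝ)/2) := by
          field_simp
          ring
        calc |heatGx y t (X τ) τ| ≤ |heatGx y t (X τ) τ - heatGx y t ξ0 τ| + |heatGx y t ξ0 τ| := h4
          _ ≤ (3*m/Real.sqrt (2*Real.pi)) * (t-τ) ^ (γ - 3/2)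
              + 4/(Real.sqrt (2*Real.pi) * r₀) * (t-τ) ^ (-(1:ℝ)/2) := by
            rw [← h5]
            exact add_le_add (hdiffB y τ hτ) hfar
      calc |heatGx y t (X τ) τ| * |φ τ|
          ≤ ((3*m/Real.sqrt (2*Real.pi)) * (t-τ) ^ (γ - 3/2)
              + 4/(Real.sqrt (2*Real.pi) * r₀) * (t-τ) ^ (-(1:ℝ)/2)) * (C₀ * τ ^ (ν-1)) := by
            apply mul_le_mul htri (hφabs τ hτ) (abs_nonneg _)
            have := Real.rpow_nonneg h1.le (γ - 3/2)
            have := Real.rpow_nonneg h1.le (-(1:ℝ)/2)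
            positivity
        _ = (C₀ * (4/(Real.sqrt (2*Real.pi) * r₀))) * (τ^(ν-1)*(t-τ)^(-(1:ℝ)/2))
            + (C₀ * (3*m/Real.sqrt (2*Real.pi))) * (τ^(ν-1)*(t-τ)^(γ - 3/2)) := by ring
    · exact ((int_prod ht hν (by norm_num)).const_mul _).add
        ((int_prod ht hν (by linarith)).const_mul _)
    · apply Eventually.of_forall
      intro τ
      intro y hy
      exact (heatG_hasDeriv y).mul_const (φ τ)
  -- assembly
  have hIoo : ∀ x : ℝ, x ∈ Iio ξ0 → x ≠ ξ0 := fun x hx => ne_of_lt hx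
  have hIoi : ∀ x : ℝ, x ∈ Ioi ξ0 → x ≠ ξ0 := fun x hx => ne_of_gt hx
  constructor
  · have hlim : Filter.Tendsto I (nhdsWithin ξ0 (Iio ξ0)) (nhds (φ t + I ξ0)) := by
      have h1 : Filter.Tendsto (fun x => R x + (E x + φ t * B x)) (nhdsWithin ξ0 (Iio ξ0))
          (nhds (R ξ0 + (0 + φ t * 1))) := by
        apply Filter.Tendsto.add (hRlim.mono_left nhdsWithin_le_nhds)
        apply Filter.Tendsto.add
          (hElim.mono_left (nhdsWithin_mono _ (fun x hx => hIoo x hx)))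
          ((hBleft).const_mul (φ t))
      have h2 : (fun x => R x + (E x + φ t * B x)) =ᶠ[nhdsWithin ξ0 (Iio ξ0)] I := by
        apply eventually_nhdsWithin_of_forall
        intro x hx
        exact (hIsplit x (hIoo x hx)).symm
      have h3 := h1.congr' h2
      have h4 : R ξ0 + (0 + φ t * 1) = φ t + I ξ0 := by rw [hIXt]; ring
      rwa [h4] at h3
    apply hlim.congr'
    apply eventually_nhdsWithin_of_forall
    intro x hx
    exact (hderiv x (hIoo x hx)).symm
  · have hlim : Filter.Tendsto I (nhdsWithin ξ0 (Ioi ξ0)) (nhds (-φ t + I ξ0)) := by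
      have h1 : Filter.Tendsto (fun x => R x + (E x + φ t * B x)) (nhdsWithin ξ0 (Ioi ξ0))
          (nhds (R ξ0 + (0 + φ t * (-1)))) := by
        apply Filter.Tendsto.add (hRlim.mono_left nhdsWithin_le_nhds)
        apply Filter.Tendsto.add
          (hElim.mono_left (nhdsWithin_mono _ (fun x hx => hIoi x hx)))
          ((hBright).const_mul (φ t))
      have h2 : (fun x => R x + (E x + φ t * B x)) =ᶠ[nhdsWithin ξ0 (Ioi ξ0)] I := by
        apply eventually_nhdsWithin_of_forall
        intro x hx
        exact (hIsplit x (hIoi x hx)).symm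
      have h3 := h1.congr' h2
      have h4 : R ξ0 + (0 + φ t * (-1)) = -φ t + I ξ0 := by rw [hIXt]; ring
      rwa [h4] at h3
    apply hlim.congr'
    apply eventually_nhdsWithin_of_forall
    intro x hx
    exact (hderiv x (hIoi x hx)).symm
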